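/- Fix an integer d ≥ 2 and let ρ(x, y) = arccos⟨x, y⟩ denote the geodesic distance on the unit sphere S^d ⊂ ℝ^{d+1}. Then there exist constants K ≥ K' > 0, depending only on d, such that for every n ∈ ℕ there exist 2^n points x_{n,1}, …, x_{n,2^n} ∈ S^d with the property that for every 2 ≤ k ≤ 2^n: min_{1 ≤ i ≤ k−1} ρ(x_{n,k}, x_{n,i}) = ρ(x_{n,k}, x_{n,k−1}) and K' 2^{−n} ≤ ρ(x_{n,k}, x_{n,k−1}) ≤ K 2^{−n}. -/

import Mathlib

/-- The geodesic distance on the unit sphere: ρ(x,y) = arccos⟨x,y⟩. -/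
noncomputable def geoDist {d : ℕ} (x y : EuclideanSpace ℝ (Fin (d+1))) : ℝ :=
  Real.arccos (inner ℝ x y)

open Real in
/-- for each n there are 2^n approximately equally separated points
x 0, …, x (2^n − 1) on S^d: for every index k with 1 ≤ k < 2^n, the minimum of
ρ(x k, x i) over i < k is attained at i = k − 1, and
K' 2^{−n} ≤ ρ(x k, x (k−1)) ≤ K 2^{−n}, with constants K ≥ K' > 0 depending only on d. -/
theorem stmt16 (d : ℕ) (hd : 2 ≤ d) :
    ∃ K K' : ℝ, 0 < K' ∧ K' ≤ K ∧
      ∀ n : ℕ, ∃ x : ℕ → EuclideanSpace ℝ (Fin (d+1)),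
        (∀ i, i < 2^n → ‖x i‖ = 1) ∧
        ∀ k : ℕ, 1 ≤ k → k < 2^n →
          (∀ i, i < k → geoDist (x k) (x (k-1)) ≤ geoDist (x k) (x i)) ∧
          K' * (1/2)^n ≤ geoDist (x k) (x (k-1)) ∧
          geoDist (x k) (x (k-1)) ≤ K * (1/2)^n := by
  have h01 : (0 : Fin (d+1)) ≠ 1 := by
    have : 1 < d + 1 := by omega
    simp [Fin.ext_iff, Nat.mod_eq_of_lt this]
  set v : ℝ → EuclideanSpace ℝ (Fin (d+1)) := fun a =>
    (Real.cos a) • EuclideanSpace.single (0 : Fin (d+1)) (1:ℝ)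
      + (Real.sin a) • EuclideanSpace.single 1 (1:ℝ) with hv
  have hinner : ∀ a b : ℝ, (inner ℝ (v a) (v b) : ℝ) = Real.cos (a - b) := by
    intro a b
    simp [hv, inner_add_left, inner_add_right, real_inner_smul_left, real_inner_smul_right,
      EuclideanSpace.inner_single_left, EuclideanSpace.single_apply, h01, h01.symm, Real.cos_sub]
    ring
  have hnorm : ∀ a : ℝ, ‖v a‖ = 1 := by
    intro a
    have h := hinner a a
    rw [real_inner_self_eq_norm_sq] at h
    simp at h
    rcases h with h | h
    · exact h
    · nlinarith [norm_nonneg (v a)]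
  refine ⟨π, π, Real.pi_pos, le_refl _, fun n => ?_⟩
  have h2n : (0:ℝ) < 2^n := by positivity
  set c : ℝ := π / 2^n with hc
  have hcpos : 0 < c := by positivity
  refine ⟨fun k => v (k * c), fun i _ => hnorm _, fun k hk1 hk2 => ?_⟩
  have hgeo : ∀ i, i < k → geoDist (v (k * c)) (v (i * c)) = ((k:ℝ) - i) * c := by
    intro i hik
    have hki : (1:ℝ) ≤ (k:ℝ) - i := by
      have : (i:ℝ) + 1 ≤ k := by exact_mod_cast hik
      linarith
    have hkub : (k:ℝ) - i ≤ 2^n := by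
      have : (k:ℝ) ≤ 2^n := by exact_mod_cast hk2.le
      have : (0:ℝ) ≤ i := Nat.cast_nonneg i
      linarith [show (k:ℝ) ≤ 2^n from by exact_mod_cast hk2.le]
    show Real.arccos _ = _
    rw [hinner]
    have he : (k:ℝ) * c - i * c = ((k:ℝ) - i) * c := by ring
    rw [he, Real.arccos_cos]
    · nlinarith
    · calc ((k:ℝ) - i) * c ≤ 2^n * c := by nlinarith
        _ = π := by rw [hc]; field_simp
  have hkm1 : k - 1 < k := by omega
  have hcast : (k:ℝ) - ((k-1 : ℕ):ℝ) = 1 := by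
    have : ((k-1:ℕ):ℝ) = (k:ℝ) - 1 := by
      have := Nat.cast_sub hk1 (R := ℝ)
      simpa using this
    rw [this]; ring
  have hmain : geoDist (v ((k:ℝ) * c)) (v (((k-1:ℕ):ℝ) * c)) = c := by
    rw [hgeo _ hkm1, hcast, one_mul]
  have hpic : π * (1/2:ℝ)^n = c := by
    rw [hc]; rw [div_pow]; ring
  refine ⟨fun i hik => ?_, ?_, ?_⟩ <;> beta_reduce
  · rw [hmain, hgeo i hik]
    have : (1:ℝ) ≤ (k:ℝ) - i := by
      have : (i:ℝ) + 1 ≤ k := by exact_mod_cast hik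
      linarith
    nlinarith
  · rw [hmain, hpic]
  · rw [hmain, hpic]
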